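/- Let n ≥ 1, let u⋆ ∈ {X,Y,Z}^{n−1}, set b^{(0)} := (u⋆, X) and b^{(1)} := (u⋆, Y), and let ρ^{(0)} := ρ_{b^{(0)}} and ρ^{(1)} := ρ_{b^{(1)}} be the corresponding prefix/tree states with coefficients α, β_1,…,β_{n−1}. Then ρ^{(0)} − ρ^{(1)} = (α/D)(P_{b^{(0)}}^{(n)} − P_{b^{(1)}}^{(n)}), and the trace distance satisfies (1/2)‖ρ^{(0)} − ρ^{(1)}‖₁ = |α|/√2. -/

import Mathlib

open Matrix Finset

noncomputable section

/-- The three Pauli matrices `σ_X, σ_Y, σ_Z` as `2 × 2` complex matrices. -/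
def pauli : Fin 3 → Matrix (Fin 2) (Fin 2) ℂ :=
  ![!![0, 1; 1, 0], !![0, -Complex.I; Complex.I, 0], !![1, 0; 0, -1]]

/-- The prefix Pauli operator `P_b^{(k)} = (⊗_{i=1}^k σ_{b_i}) ⊗ I^{⊗(n-k)}`, realized as a
`2^n × 2^n` complex matrix indexed by `Fin n → Fin 2` (the `i`-th tensor factor of the Kronecker
product is `σ_{b_i}` if `i < k` (0-indexed) and the identity otherwise). -/
def prefixPauli (n : ℕ) (b : Fin n → Fin 3) (k : ℕ) :
    Matrix (Fin n → Fin 2) (Fin n → Fin 2) ℂ :=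
  Matrix.of fun x y =>
    ∏ i : Fin n,
      (if (i : ℕ) < k then pauli (b i) else (1 : Matrix (Fin 2) (Fin 2) ℂ)) (x i) (y i)

/-- The prefix/tree state `ρ_b = (1/D)(I + ∑_{k=1}^{n-1} β_k P_b^{(k)} + α P_b^{(n)})`,
with `D = 2^n`. -/
def rhoState (n : ℕ) (b : Fin n → Fin 3) (α : ℝ) (β : ℕ → ℝ) :
    Matrix (Fin n → Fin 2) (Fin n → Fin 2) ℂ :=
  ((2 : ℂ) ^ n)⁻¹ •
    (1 + ∑ k ∈ Finset.Icc 1 (n - 1), (β k : ℂ) • prefixPauli n b k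
       + (α : ℂ) • prefixPauli n b n)

/-- The trace norm of a Hermitian matrix: the sum of the absolute values of its (real)
eigenvalues. -/
def traceNorm {d : Type*} [Fintype d] [DecidableEq d] {A : Matrix d d ℂ}
    (hA : A.IsHermitian) : ℝ :=
  ∑ i, |hA.eigenvalues i|

/-! ### Auxiliary lemmas -/

/-- Kronecker product of `n` copies of `2×2` matrices, as an entrywise product. -/
def kron (n : ℕ) (f : Fin n → Matrix (Fin 2) (Fin 2) ℂ) :
    Matrix (Fin n → Fin 2) (Fin n → Fin 2) ℂ :=
  Matrix.of fun x y => ∏ i, f i (x i) (y i)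

lemma kron_mul (n : ℕ) (f g : Fin n → Matrix (Fin 2) (Fin 2) ℂ) :
    kron n f * kron n g = kron n (fun i => f i * g i) := by
  ext x y
  simp only [kron, Matrix.mul_apply, Matrix.of_apply, ← Finset.prod_mul_distrib]
  rw [← Fintype.prod_sum (fun i j => f i (x i) j * g i j (y i))]

lemma kron_one (n : ℕ) : kron n (fun _ => 1) = 1 := by
  ext x y
  simp only [kron, Matrix.of_apply, Matrix.one_apply, Finset.prod_boole]
  simp [funext_iff]

lemma pauli_mul_self (u : Fin 3) : pauli u * pauli u = 1 := by
  fin_cases u <;> ext i j <;> fin_cases i <;> fin_cases j <;>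
    simp [pauli, Matrix.mul_apply, Fin.sum_univ_two, Matrix.one_apply, Complex.I_mul_I]

lemma pauli_anticomm (a b : Fin 2) :
    (pauli 0 * pauli 1) a b + (pauli 1 * pauli 0) a b = 0 := by
  fin_cases a <;> fin_cases b <;>
    simp [pauli, Matrix.mul_apply, Fin.sum_univ_two]

lemma prefixPauli_top (n : ℕ) (b : Fin n → Fin 3) :
    prefixPauli n b n = kron n (fun i => pauli (b i)) := by
  unfold prefixPauli kron
  congr 1
  funext x y
  exact Finset.prod_congr rfl fun i _ => by rw [if_pos i.isLt]

/-- If a Hermitian matrix squares to `γ • 1`, each eigenvalue squares to `γ`. -/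
lemma eig_sq {d : Type*} [Fintype d] [DecidableEq d] {A : Matrix d d ℂ}
    (hA : A.IsHermitian) (γ : ℝ) (h : A * A = (γ : ℂ) • 1) (j : d) :
    hA.eigenvalues j ^ 2 = γ := by
  have hv := hA.mulVec_eigenvectorBasis j
  have h2 : (A * A) *ᵥ ⇑(hA.eigenvectorBasis j) =
      (hA.eigenvalues j ^ 2 : ℝ) • ⇑(hA.eigenvectorBasis j) := by
    rw [← Matrix.mulVec_mulVec, hv, Matrix.mulVec_smul, hv, smul_smul, ← sq]
  rw [h, Matrix.smul_mulVec, Matrix.one_mulVec] at h2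
  have hne : ⇑(hA.eigenvectorBasis j) ≠ 0 := by
    have := hA.eigenvectorBasis.toBasis.ne_zero j
    simpa using fun hc => this (by simpa using hc)
  have hz : ((γ : ℂ) - ((hA.eigenvalues j ^ 2 : ℝ) : ℂ)) • ⇑(hA.eigenvectorBasis j) = 0 := by
    rw [sub_smul, Complex.coe_smul, Complex.coe_smul, ← h2, Complex.coe_smul, sub_self]
  rcases smul_eq_zero.mp hz with h0 | h0
  · have : (γ : ℂ) = ((hA.eigenvalues j ^ 2 : ℝ) : ℂ) := sub_eq_zero.mp h0
    exact_mod_cast this.symm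
  · exact absurd h0 hne

/-- Hard pair with prefix cancellation: for `b^{(0)} = (u⋆, X)` and `b^{(1)} = (u⋆, Y)`,
the corresponding prefix/tree states satisfy
`ρ^{(0)} − ρ^{(1)} = (α/D)(P_{b^{(0)}}^{(n)} − P_{b^{(1)}}^{(n)})` and
`(1/2)‖ρ^{(0)} − ρ^{(1)}‖₁ = |α|/√2`. -/
theorem hard_pair_prefix_cancellation (n : ℕ) (hn : 1 ≤ n)
    (ustar : Fin (n - 1) → Fin 3) (α : ℝ) (β : ℕ → ℝ)
    (b0 b1 : Fin n → Fin 3)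
    (hb0 : ∀ i : Fin n, b0 i = if h : (i : ℕ) < n - 1 then ustar ⟨(i : ℕ), h⟩ else 0)
    (hb1 : ∀ i : Fin n, b1 i = if h : (i : ℕ) < n - 1 then ustar ⟨(i : ℕ), h⟩ else 1)
    (hΔ : (rhoState n b0 α β - rhoState n b1 α β).IsHermitian) :
    rhoState n b0 α β - rhoState n b1 α β =
      ((α : ℂ) / (2 : ℂ) ^ n) • (prefixPauli n b0 n - prefixPauli n b1 n) ∧
    (1 / 2) * traceNorm hΔ = |α| / Real.sqrt 2 := by
  have hlastlt : n - 1 < n := by omega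
  set last : Fin n := ⟨n - 1, hlastlt⟩ with hlast
  have hb0l : b0 last = 0 := by rw [hb0]; simp [last]
  have hb1l : b1 last = 1 := by rw [hb1]; simp [last]
  have hagree : ∀ i : Fin n, i ≠ last → b0 i = b1 i := by
    intro i hi
    have hine : (i : ℕ) ≠ n - 1 := fun hc => hi (Fin.ext hc)
    have hilt : (i : ℕ) < n - 1 := by have := i.isLt; omega
    rw [hb0 i, hb1 i, dif_pos hilt, dif_pos hilt]
  -- prefix cancellation
  have hpre : ∀ k ∈ Finset.Icc 1 (n - 1), prefixPauli n b0 k = prefixPauli n b1 k := by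
    intro k hk
    unfold prefixPauli
    congr 1
    funext x y
    refine Finset.prod_congr rfl fun i _ => ?_
    by_cases h : (i : ℕ) < k
    · have hi : i ≠ last := by
        intro hc
        have hk2 := (Finset.mem_Icc.mp hk).2
        rw [hc] at h
        simp only [last] at h
        omega
      rw [if_pos h, if_pos h, hagree i hi]
    · rw [if_neg h, if_neg h]
  have hdiff : rhoState n b0 α β - rhoState n b1 α β =
      ((α : ℂ) / (2 : ℂ) ^ n) • (prefixPauli n b0 n - prefixPauli n b1 n) := by
    unfold rhoState
    have hS : (∑ k ∈ Finset.Icc 1 (n - 1), (β k : ℂ) • prefixPauli n b0 k) =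
        ∑ k ∈ Finset.Icc 1 (n - 1), (β k : ℂ) • prefixPauli n b1 k :=
      Finset.sum_congr rfl fun k hk => by rw [hpre k hk]
    rw [hS, ← smul_sub]
    have hc : ((α : ℂ) / (2 : ℂ) ^ n) = ((2 : ℂ) ^ n)⁻¹ * (α : ℂ) := by
      rw [div_eq_mul_inv, mul_comm]
    rw [hc, ← smul_smul]
    congr 1
    module
  refine ⟨hdiff, ?_⟩
  -- set up abbreviations
  set P0 := kron n (fun i => pauli (b0 i)) with hP0
  set P1 := kron n (fun i => pauli (b1 i)) with hP1
  have hP0top : prefixPauli n b0 n = P0 := prefixPauli_top n b0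
  have hP1top : prefixPauli n b1 n = P1 := prefixPauli_top n b1
  have hP00 : P0 * P0 = 1 := by
    rw [hP0, kron_mul]
    simp only [pauli_mul_self]
    exact kron_one n
  have hP11 : P1 * P1 = 1 := by
    rw [hP1, kron_mul]
    simp only [pauli_mul_self]
    exact kron_one n
  have hanti : P0 * P1 + P1 * P0 = 0 := by
    rw [hP0, hP1, kron_mul, kron_mul]
    ext x y
    simp only [Matrix.add_apply, kron, Matrix.of_apply, Matrix.zero_apply]
    rw [← Finset.mul_prod_erase Finset.univ _ (Finset.mem_univ last),
        ← Finset.mul_prod_erase Finset.univ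
          (fun i => (pauli (b1 i) * pauli (b0 i)) (x i) (y i)) (Finset.mem_univ last)]
    have hrest : (∏ i ∈ Finset.univ.erase last, (pauli (b0 i) * pauli (b1 i)) (x i) (y i)) =
        ∏ i ∈ Finset.univ.erase last, (pauli (b1 i) * pauli (b0 i)) (x i) (y i) := by
      refine Finset.prod_congr rfl fun i hi => ?_
      rw [hagree i (Finset.mem_erase.mp hi).1]
    rw [hrest, ← add_mul, hb0l, hb1l, pauli_anticomm, zero_mul]
  -- square of the difference
  have h4n : ((4 : ℂ) ^ n) = (2 : ℂ) ^ n * (2 : ℂ) ^ n := by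
    rw [← mul_pow]; norm_num
  have h2n : ((2 : ℂ) ^ n) ≠ 0 := pow_ne_zero n two_ne_zero
  set γ : ℝ := 2 * α ^ 2 / 4 ^ n with hγdef
  have hsq : (rhoState n b0 α β - rhoState n b1 α β) *
      (rhoState n b0 α β - rhoState n b1 α β) = (γ : ℂ) • 1 := by
    rw [hdiff, hP0top, hP1top, Matrix.smul_mul, Matrix.mul_smul, smul_smul]
    have hPP : (P0 - P1) * (P0 - P1) = (2 : ℂ) • 1 := by
      rw [sub_mul, mul_sub, mul_sub, hP00, hP11,
        eq_neg_of_add_eq_zero_left hanti]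
      module
    rw [hPP, smul_smul]
    congr 1
    have : ((γ : ℝ) : ℂ) = 2 * (α : ℂ) ^ 2 / 4 ^ n := by
      rw [hγdef]; push_cast; ring
    rw [this, h4n]
    field_simp
  -- eigenvalues
  have heig : ∀ j, |hΔ.eigenvalues j| = Real.sqrt 2 * |α| / 2 ^ n := by
    intro j
    have h1 := eig_sq hΔ γ hsq j
    have h2 : γ = (Real.sqrt 2 * |α| / 2 ^ n) ^ 2 := by
      have h4r : (4 : ℝ) ^ n = 2 ^ n * 2 ^ n := by rw [← mul_pow]; norm_num
      rw [hγdef, div_pow, mul_pow, Real.sq_sqrt (by norm_num : (0:ℝ) ≤ 2), sq_abs, h4r]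
      ring
    have h3 : |hΔ.eigenvalues j| = Real.sqrt γ := by
      rw [← h1, Real.sqrt_sq_eq_abs]
    rw [h3, h2, Real.sqrt_sq (by positivity)]
  -- sum up
  have hcard : Fintype.card (Fin n → Fin 2) = 2 ^ n := by
    simp [Fintype.card_fun]
  have hsum : traceNorm hΔ = Real.sqrt 2 * |α| := by
    unfold traceNorm
    rw [Finset.sum_congr rfl fun j _ => heig j, Finset.sum_const, Finset.card_univ, hcard,
      nsmul_eq_mul]
    have h2r : ((2 : ℝ) ^ n) ≠ 0 := by positivity
    push_cast
    field_simp
  rw [hsum]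
  have hs2 : Real.sqrt 2 * Real.sqrt 2 = 2 := Real.mul_self_sqrt (by norm_num)
  have hs2ne : Real.sqrt 2 ≠ 0 := by positivity
  field_simp
  linear_combination |α| * hs2

end
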